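/- Fix a real constant C > 0, a real number ν > 0, a vector n ∈ ℝ^m, and finitely many vectors a_1, …, a_K ∈ ℝ^m with real offsets b_1, …, b_K. Then the function y(x) = C · (1 - ν·e^{-n·x})^{-1} · Σ_{k=1}^{K} e^{a_k·x + b_k} is convex on the convex set S = { x ∈ ℝ^m | ν·e^{-n·x} < 1 }. -/

import Mathlib

open Real Filter Finset

private lemma myConvexOn_sum {E : Type*} [AddCommMonoid E] [Module ℝ E] {s : Set E}
    (hs : Convex ℝ s) {ι : Type*} (t : Finset ι) (f : ι → E → ℝ)
    (hf : ∀ i ∈ t, ConvexOn ℝ s (f i)) :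
    ConvexOn ℝ s (fun x => ∑ i ∈ t, f i x) := by
  classical
  induction t using Finset.induction_on with
  | empty => simpa using convexOn_const 0 hs
  | @insert i t hnot ih =>
    simp only [Finset.sum_insert hnot]
    exact (hf i (Finset.mem_insert_self i t)).add
      (ih fun j hj => hf j (Finset.mem_insert_of_mem hj))

private lemma convexOn_const_mul_exp_linear {m : ℕ} (c : ℝ) (hc : 0 ≤ c) (w : Fin m → ℝ)
    (d : ℝ) :
    ConvexOn ℝ Set.univ (fun x : Fin m → ℝ => c * Real.exp ((∑ i, w i * x i) + d)) := by
  refine ⟨convex_univ, ?_⟩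
  intro x _ y _ p q hp hq hpq
  have hlin : (∑ i, w i * (p • x + q • y) i) + d
      = p * ((∑ i, w i * x i) + d) + q * ((∑ i, w i * y i) + d) := by
    simp only [Pi.add_apply, Pi.smul_apply, smul_eq_mul, ← Finset.sum_add_distrib]
    have h1 : ∀ i ∈ Finset.univ, w i * (p * x i + q * y i)
        = p * (w i * x i) + q * (w i * y i) := fun i _ => by ring
    rw [Finset.sum_congr rfl h1, Finset.sum_add_distrib, ← Finset.mul_sum, ← Finset.mul_sum]
    have : p * d + q * d = d := by rw [← add_mul, hpq, one_mul]
    linarith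
  have hexp := convexOn_exp.2 (Set.mem_univ ((∑ i, w i * x i) + d))
      (Set.mem_univ ((∑ i, w i * y i) + d)) hp hq hpq
  simp only [smul_eq_mul] at hexp ⊢
  rw [hlin]
  calc c * Real.exp (p * ((∑ i, w i * x i) + d) + q * ((∑ i, w i * y i) + d))
      ≤ c * (p * Real.exp ((∑ i, w i * x i) + d) + q * Real.exp ((∑ i, w i * y i) + d)) :=
        mul_le_mul_of_nonneg_left hexp hc
    _ = p * (c * Real.exp ((∑ i, w i * x i) + d))
        + q * (c * Real.exp ((∑ i, w i * y i) + d)) := by ring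

/-- The enzyme cost of a single reaction,
`y(x) = C · (1 - ν·e^(-n·x))⁻¹ · ∑ k, e^(a k · x + b k)`,
is convex on the convex set `S = {x | ν·e^(-n·x) < 1}`. -/
theorem enzyme_cost_convexOn (m K : ℕ) (C : ℝ) (hC : 0 < C) (ν : ℝ) (hν : 0 < ν)
    (n : Fin m → ℝ) (a : Fin K → Fin m → ℝ) (b : Fin K → ℝ) :
    ConvexOn ℝ {x : Fin m → ℝ | ν * Real.exp (-(∑ i, n i * x i)) < 1}
      (fun x : Fin m → ℝ =>
        C * (1 - ν * Real.exp (-(∑ i, n i * x i)))⁻¹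
          * ∑ k : Fin K, Real.exp (∑ i, a k i * x i + b k)) := by
  classical
  set S : Set (Fin m → ℝ) := {x : Fin m → ℝ | ν * Real.exp (-(∑ i, n i * x i)) < 1} with hS
  -- the "saturation" function and the kinetic sum
  set g : (Fin m → ℝ) → ℝ := fun x => ν * Real.exp (-(∑ i, n i * x i)) with hg
  set E : (Fin m → ℝ) → ℝ := fun x => ∑ k : Fin K, Real.exp (∑ i, a k i * x i + b k) with hE
  set F : ℕ → (Fin m → ℝ) → ℝ :=
    fun N x => C * (∑ j ∈ Finset.range N, (g x) ^ j) * E x with hF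
  -- convexity of the domain
  have hSconv : Convex ℝ S := by
    have h := (convexOn_const_mul_exp_linear ν hν.le (fun i => -n i) 0).convex_lt 1
    have hset : {x ∈ (Set.univ : Set (Fin m → ℝ)) |
        ν * Real.exp ((∑ i, (-n i) * x i) + 0) < 1} = S := by
      ext x
      simp [hS, neg_mul, Finset.sum_neg_distrib]
    rwa [hset] at h
  -- each truncated function is convex (on all of space)
  have hFconv : ∀ N, ConvexOn ℝ (Set.univ : Set (Fin m → ℝ)) (F N) := by
    intro N
    have hrw : F N = fun x => ∑ j ∈ Finset.range N, ∑ k : Fin K,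
        (C * ν ^ j * Real.exp (b k)) *
          Real.exp ((∑ i, (a k i - (j : ℝ) * n i) * x i) + 0) := by
      funext x
      simp only [hF, hE]
      calc (C * ∑ j ∈ Finset.range N, g x ^ j) * ∑ k : Fin K, Real.exp (∑ i, a k i * x i + b k)
          = ∑ k : Fin K, ∑ j ∈ Finset.range N,
              C * g x ^ j * Real.exp (∑ i, a k i * x i + b k) := by
            rw [Finset.mul_sum]
            exact Finset.sum_congr rfl fun k _ => by rw [Finset.mul_sum, Finset.sum_mul]
        _ = ∑ j ∈ Finset.range N, ∑ k : Fin K,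
              C * g x ^ j * Real.exp (∑ i, a k i * x i + b k) := Finset.sum_comm
        _ = ∑ j ∈ Finset.range N, ∑ k : Fin K, (C * ν ^ j * Real.exp (b k)) *
              Real.exp ((∑ i, (a k i - (j : ℝ) * n i) * x i) + 0) := ?_
      refine Finset.sum_congr rfl fun j _ => Finset.sum_congr rfl fun k _ => ?_
      have hgp : g x ^ j = ν ^ j * Real.exp (-((j : ℝ) * ∑ i, n i * x i)) := by
        rw [hg, mul_pow, ← Real.exp_nat_mul]
        ring_nf
      have hsum : ∑ i, (a k i - (j : ℝ) * n i) * x i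
          = (∑ i, a k i * x i) - (j : ℝ) * ∑ i, n i * x i := by
        simp only [sub_mul, Finset.sum_sub_distrib, Finset.mul_sum]
        congr 1
        exact Finset.sum_congr rfl fun i _ => by ring
      have e1 : C * (ν ^ j * Real.exp (-((j : ℝ) * ∑ i, n i * x i)))
            * Real.exp (∑ i, a k i * x i + b k)
          = C * ν ^ j *
            Real.exp ((-((j : ℝ) * ∑ i, n i * x i)) + ((∑ i, a k i * x i) + b k)) := by
        simp only [Real.exp_add, Real.exp_zero, Real.exp_neg, Real.exp_sub]; ring
      have e2 : C * ν ^ j * Real.exp (b k) *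
            Real.exp ((∑ i, a k i * x i) - (j : ℝ) * (∑ i, n i * x i) + 0)
          = C * ν ^ j *
            Real.exp (b k + ((∑ i, a k i * x i) - (j : ℝ) * (∑ i, n i * x i) + 0)) := by
        simp only [Real.exp_add, Real.exp_zero, Real.exp_neg, Real.exp_sub]; ring
      rw [hgp, hsum, e1, e2]
      congr 1
      exact congrArg Real.exp (by ring)
    rw [hrw]
    refine myConvexOn_sum convex_univ _ _ fun j _ => ?_
    refine myConvexOn_sum convex_univ _ _ fun k _ => ?_
    exact convexOn_const_mul_exp_linear _ (by positivity) _ _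
  -- convergence of the truncations on S
  have hFtend : ∀ z ∈ S, Tendsto (fun N => F N z) atTop
      (nhds (C * (1 - g z)⁻¹ * E z)) := by
    intro z hz
    have hg0 : 0 ≤ g z := by positivity
    have hg1 : g z < 1 := hz
    have hgeo := (hasSum_geometric_of_lt_one hg0 hg1).tendsto_sum_nat
    exact (hgeo.const_mul C).mul_const (E z)
  refine ⟨hSconv, ?_⟩
  intro x hx y hy p q hp hq hpq
  have hz : p • x + q • y ∈ S := hSconv hx hy hp hq hpq
  have hlim1 : Tendsto (fun N => F N (p • x + q • y)) atTop
      (nhds (C * (1 - g (p • x + q • y))⁻¹ * E (p • x + q • y))) := hFtend _ hz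
  have hlim2 : Tendsto (fun N => p * F N x + q * F N y) atTop
      (nhds (p * (C * (1 - g x)⁻¹ * E x) + q * (C * (1 - g y)⁻¹ * E y))) :=
    ((hFtend x hx).const_mul p).add ((hFtend y hy).const_mul q)
  have hle : ∀ N, F N (p • x + q • y) ≤ p * F N x + q * F N y := fun N =>
    (hFconv N).2 (Set.mem_univ x) (Set.mem_univ y) hp hq hpq
  simpa [smul_eq_mul, hg, hE] using le_of_tendsto_of_tendsto' hlim1 hlim2 hle
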